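/- If the POVM {Π_i} refines the spectral projectors of ρ, i.e., each eigenprojector P_ρ of ρ can be written as P_ρ = ∑_{i ∈ I^(ρ)} Π_i for disjoint index sets I^(ρ) partitioning the index set, then S_C(ρ) = S_vN(ρ). -/

import Mathlib

open scoped Matrix ComplexOrder

open Matrix in
private lemma psd_trace_nonneg' {n : Type*} [Fintype n] [DecidableEq n]
    {A : Matrix n n ℂ} (hA : A.PosSemidef) : 0 ≤ A.trace := by
  have h : ∀ i, 0 ≤ A i i := fun i => hA.diag_nonneg
  exact Finset.sum_nonneg fun i _ => h i

open Matrix in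
private lemma psd_sum' {n ι : Type*} [Fintype n] [DecidableEq n]
    (s : Finset ι) (Q : ι → Matrix n n ℂ) (hQ : ∀ i ∈ s, (Q i).PosSemidef) :
    (∑ i ∈ s, Q i).PosSemidef := by
  classical
  induction s using Finset.induction_on with
  | empty => simpa using Matrix.PosSemidef.zero
  | insert a t hni ih =>
      rw [Finset.sum_insert hni]
      exact (hQ a (Finset.mem_insert_self a t)).add
        (ih fun i hi => hQ i (Finset.mem_insert_of_mem hi))

open Matrix MatrixOrder in
private lemma psd_trace_mul_nonneg' {n : Type*} [Fintype n] [DecidableEq n]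
    {A B : Matrix n n ℂ} (hA : A.PosSemidef) (hB : B.PosSemidef) :
    0 ≤ (A * B).trace := by
  have hs : CFC.sqrt B * CFC.sqrt B = B := CFC.sqrt_mul_sqrt_self B hB.nonneg
  have h1 : (CFC.sqrt B * A * CFC.sqrt B).trace = (A * B).trace := by
    rw [Matrix.trace_mul_cycle, hs, Matrix.trace_mul_comm]
  rw [← h1]
  have hpsd : (CFC.sqrt B * A * (CFC.sqrt B)ᴴ).PosSemidef :=
    hA.mul_mul_conjTranspose_same (CFC.sqrt B)
  rw [(CFC.sqrt_nonneg B).posSemidef.isHermitian.eq] at hpsd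
  exact psd_trace_nonneg' hpsd

/-- If the POVM `{Q i}` refines the spectral projectors of `ρ`, i.e., each
eigenprojector `P s` (of eigenvalue `e s`) is a sum of POVM elements over a block of a
partition of the index set, then observational entropy equals the von Neumann entropy
`-∑ s, tr (P s) * e s * ln (e s)`. -/
theorem obs_entropy_eq_vN_of_refinement
    {n ι σ : Type*} [Fintype n] [DecidableEq n] [Fintype ι] [Fintype σ] [DecidableEq σ]
    (ρ : Matrix n n ℂ) (hρ : ρ.PosSemidef) (hρ1 : ρ.trace = 1)
    (e : σ → ℝ) (he : Function.Injective e)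
    (P : σ → Matrix n n ℂ)
    (hherm : ∀ s, (P s).IsHermitian)
    (hproj : ∀ s, P s * P s = P s)
    (horth : ∀ s t, s ≠ t → P s * P t = 0)
    (hcomp : ∑ s, P s = 1)
    (hspec : ρ = ∑ s, (e s : ℂ) • P s)
    (Q : ι → Matrix n n ℂ) (hQ : ∀ i, (Q i).PosSemidef) (hQsum : ∑ i, Q i = 1)
    (f : ι → σ)
    (href : ∀ s, P s = ∑ i ∈ Finset.univ.filter (f · = s), Q i) :
    -∑ i, (Q i * ρ).trace.re * Real.log ((Q i * ρ).trace.re / (Q i).trace.re)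
      = -∑ s, (P s).trace.re * (e s * Real.log (e s)) := by
  classical
  -- P (f i) - Q i is PSD
  have hsub : ∀ i, (P (f i) - Q i).PosSemidef := by
    intro i
    have hmem : i ∈ Finset.univ.filter (f · = f i) := by simp
    have : P (f i) = Q i + ∑ j ∈ (Finset.univ.filter (f · = f i)).erase i, Q j := by
      rw [href (f i), Finset.add_sum_erase _ _ hmem]
    rw [this, add_sub_cancel_left]
    exact psd_sum' _ _ fun j _ => hQ j
  -- trace of Q i * P t vanishes off the fiber
  have hQP0 : ∀ i t, t ≠ f i → (Q i * P t).trace = 0 := by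
    intro i t ht
    have hcyc : (Q i * P t).trace = (P t * Q i * P t).trace := by
      conv_lhs => rw [← hproj t]
      rw [← mul_assoc, Matrix.trace_mul_comm, ← mul_assoc]
    have hpsd1 : (P t * Q i * P t).PosSemidef := by
      have := (hQ i).mul_mul_conjTranspose_same (P t)
      rwa [(hherm t).eq] at this
    have hpsd2 : (P t * (P (f i) - Q i) * P t).PosSemidef := by
      have := (hsub i).mul_mul_conjTranspose_same (P t)
      rwa [(hherm t).eq] at this
    have horth' : P t * P (f i) = 0 := horth t (f i) ht
    have hneg : P t * (P (f i) - Q i) * P t = -(P t * Q i * P t) := by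
      rw [mul_sub, horth', sub_mul, zero_mul, zero_sub]
    have h2 : 0 ≤ -(P t * Q i * P t).trace := by
      have := psd_trace_nonneg' hpsd2
      rwa [hneg, Matrix.trace_neg] at this
    have h1 : 0 ≤ (P t * Q i * P t).trace := psd_trace_nonneg' hpsd1
    rw [hcyc]
    exact le_antisymm (neg_nonneg.mp h2) h1
  -- trace of Q i * P (f i) is trace of Q i
  have hQP1 : ∀ i, (Q i * P (f i)).trace = (Q i).trace := by
    intro i
    have : (Q i).trace = ∑ t, (Q i * P t).trace := by
      rw [← Matrix.trace_sum]
      congr 1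
      rw [← Finset.mul_sum, hcomp, mul_one]
    rw [this, Finset.sum_eq_single (f i)]
    · intro t _ ht; exact hQP0 i t ht
    · intro h; exact absurd (Finset.mem_univ _) h
  -- key trace identity
  have hQρ : ∀ i, (Q i * ρ).trace = (e (f i) : ℂ) * (Q i).trace := by
    intro i
    rw [hspec, Finset.mul_sum]
    simp_rw [Matrix.mul_smul, Matrix.trace_sum, Matrix.trace_smul]
    rw [Finset.sum_eq_single (f i)]
    · rw [hQP1 i, smul_eq_mul]
    · intro t _ ht; rw [hQP0 i t ht, smul_zero]
    · intro h; exact absurd (Finset.mem_univ _) h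
  -- real positivity facts
  have hvQ : ∀ i, 0 ≤ (Q i).trace.re ∧ (Q i).trace.im = 0 := by
    intro i
    have := psd_trace_nonneg' (hQ i)
    rw [Complex.le_def] at this
    exact ⟨this.1, this.2.symm⟩
  have hpi : ∀ i, (Q i * ρ).trace.re = e (f i) * (Q i).trace.re := by
    intro i
    rw [hQρ i, Complex.mul_re, Complex.ofReal_re, Complex.ofReal_im, zero_mul, sub_zero]
  have hpge : ∀ i, 0 ≤ (Q i * ρ).trace.re := by
    intro i
    have := psd_trace_mul_nonneg' (hQ i) hρ
    rw [Complex.le_def] at this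
    exact this.1
  -- trace of P s is sum of traces of Q in fiber
  have hPs : ∀ s, (P s).trace.re = ∑ i ∈ Finset.univ.filter (f · = s), (Q i).trace.re := by
    intro s
    rw [href s, Matrix.trace_sum, Complex.re_sum]
  -- group LHS by fibers
  rw [← Finset.sum_fiberwise Finset.univ f
    (fun i => (Q i * ρ).trace.re * Real.log ((Q i * ρ).trace.re / (Q i).trace.re))]
  congr 1
  apply Finset.sum_congr rfl
  intro s _
  rw [hPs s, Finset.sum_mul]
  apply Finset.sum_congr rfl
  intro i hi
  have hfi : f i = s := by simpa using hi
  rw [hpi i, hfi]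
  rcases eq_or_lt_of_le (hvQ i).1 with hv0 | hv0
  · simp [← hv0]
  · have hes : 0 ≤ e s := by
      have := hpge i
      rw [hpi i, hfi] at this
      nlinarith
    rcases eq_or_lt_of_le hes with he0 | he0
    · rw [← he0, zero_mul, zero_mul, Real.log_zero, zero_mul, mul_zero]
    · rw [mul_div_assoc, div_self (ne_of_gt hv0), mul_one]
      ring
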